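/- For i ∈ {1,2}, let lp_i be a coherent conditional lower prevision on C_i ⊆ C(X_i) with natural extension E_i to C(X_i), and let 𝔅_i ⊆ P_∅(X_i). Then for all {i,j} = {1,2}, every gamble h on X_j, and every nonnegative 𝔅_i-measurable gamble g on X_i (Factorisation): (lp1⊗lp2)(g·h) = E_i( g·E_j(h) ), and this equals E_i(g)·E_j(h) if E_j(h) ≥ 0 and equals Ē_i(g)·E_j(h) if E_j(h) ≤ 0, where g·h is the gamble (x1,x2) ↦ g(x_i)·h(x_j), E_j(h) := E_j(h|X_j), E_i(·) := E_i(·|X_i), Ē_i(g) := −E_i(−g), and (lp1⊗lp2)(·) abbreviates (lp1⊗lp2)(·|X1×X2). -/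

import Mathlib

open scoped BigOperators

namespace IPaper

variable {X : Type*}

/-- A gamble on `X`: a bounded real-valued function. -/
def IsGamble (f : X → ℝ) : Prop := ∃ M : ℝ, ∀ x, |f x| ≤ M

/-- The indicator gamble of an event. -/
noncomputable def ind (B : Set X) : X → ℝ := Set.indicator B 1

/-- The set `G_{>0}(X)` of nonnegative nonzero gambles. -/
def Gpos (X : Type*) : Set (X → ℝ) := {f | IsGamble f ∧ 0 ≤ f ∧ f ≠ 0}

/-- A coherent set of desirable gambles. -/
structure CoherentSDG (D : Set (X → ℝ)) : Prop where
  subset_gambles : ∀ f ∈ D, IsGamble f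
  d1 : ∀ f : X → ℝ, IsGamble f → 0 ≤ f → f ≠ 0 → f ∈ D
  d2 : ∀ f ∈ D, ∀ l : ℝ, 0 < l → l • f ∈ D
  d3 : ∀ f ∈ D, ∀ g ∈ D, f + g ∈ D
  d4 : ∀ f : X → ℝ, f ≤ 0 → f ∉ D

/-- `posi A`: positive linear hull of `A`. -/
def posi (A : Set (X → ℝ)) : Set (X → ℝ) :=
  {g | ∃ (n : ℕ) (l : Fin (n + 1) → ℝ) (h : Fin (n + 1) → X → ℝ),
    (∀ i, 0 < l i) ∧ (∀ i, h i ∈ A) ∧ g = ∑ i, l i • h i}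

/-- `E(A) := posi (A ∪ G_{>0}(X))`. -/
def natExtSet (A : Set (X → ℝ)) : Set (X → ℝ) := posi (A ∪ Gpos X)

/-- `C(X)`: all pairs of a gamble and a nonempty event. -/
def domC (X : Type*) : Set ((X → ℝ) × Set X) := {p | IsGamble p.1 ∧ p.2.Nonempty}

/-- The conditional lower prevision `lp_D` derived from a set of gambles `D`. -/
noncomputable def lpOf (D : Set (X → ℝ)) (f : X → ℝ) (B : Set X) : EReal :=
  sSup (Real.toEReal '' {m : ℝ | (fun x => (f x - m) * ind B x) ∈ D})

/-- Coherence (Williams) of a conditional lower prevision on a domain `C`. -/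
def Coherent (C : Set ((X → ℝ) × Set X)) (lp : (X → ℝ) → Set X → EReal) : Prop :=
  ∃ D : Set (X → ℝ), CoherentSDG D ∧ ∀ p ∈ C, lp p.1 p.2 = lpOf D p.1 p.2

/-- The set `A_lp`. -/
def Alp (C : Set ((X → ℝ) × Set X)) (lp : (X → ℝ) → Set X → EReal) : Set (X → ℝ) :=
  {g | ∃ p ∈ C, ∃ m : ℝ, (m : EReal) < lp p.1 p.2 ∧ g = fun x => (p.1 x - m) * ind p.2 x}

/-- `E(lp) := E(A_lp)`. -/
def ElpSet (C : Set ((X → ℝ) × Set X)) (lp : (X → ℝ) → Set X → EReal) : Set (X → ℝ) :=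
  natExtSet (Alp C lp)

/-- The natural extension of `lp` to all of `C(X)`. -/
noncomputable def natExtLP (C : Set ((X → ℝ) × Set X)) (lp : (X → ℝ) → Set X → EReal)
    (f : X → ℝ) (B : Set X) : EReal :=
  lpOf (ElpSet C lp) f B

/-- Simple `B`-measurable gamble. -/
def SimpleMeas (Bfam : Set (Set X)) (g : X → ℝ) : Prop :=
  ∃ (c0 : ℝ) (n : ℕ) (c : Fin n → ℝ) (Bs : Fin n → Set X),
    0 ≤ c0 ∧ (∀ i, 0 ≤ c i) ∧ (∀ i, Bs i ∈ Bfam) ∧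
    g = fun x => c0 + ∑ i, c i * ind (Bs i) x

/-- `B`-measurable gamble: uniform limit of nonnegative simple `B`-measurable gambles. -/
def BMeas (Bfam : Set (Set X)) (g : X → ℝ) : Prop :=
  ∃ gs : ℕ → X → ℝ, (∀ n, 0 ≤ gs n ∧ SimpleMeas Bfam (gs n)) ∧
    TendstoUniformly gs g Filter.atTop

/-- A conditional linear prevision on `C(X)`: a coherent self-conjugate conditional
lower prevision on the full domain. -/
def CondLinPrev (P : (X → ℝ) → Set X → EReal) : Prop :=
  Coherent (domC X) P ∧ ∀ p ∈ domC X, P p.1 p.2 = -P (-p.1) p.2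

section Product

variable {X1 X2 : Type*}

/-- `A_{1→2}`. -/
def A12 (D2 : Set (X2 → ℝ)) (F1 : Set (Set X1)) : Set (X1 × X2 → ℝ) :=
  {g | ∃ f2 ∈ D2, ∃ B1 ∈ F1 ∪ {Set.univ}, g = fun p => f2 p.2 * ind B1 p.1}

/-- `A_{2→1}`. -/
def A21 (D1 : Set (X1 → ℝ)) (F2 : Set (Set X2)) : Set (X1 × X2 → ℝ) :=
  {g | ∃ f1 ∈ D1, ∃ B2 ∈ F2 ∪ {Set.univ}, g = fun p => f1 p.1 * ind B2 p.2}

/-- `D1 ⊗ D2`, relative to the families of conditioning events `F1`, `F2`. -/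
def indNatExt (D1 : Set (X1 → ℝ)) (D2 : Set (X2 → ℝ))
    (F1 : Set (Set X1)) (F2 : Set (Set X2)) : Set (X1 × X2 → ℝ) :=
  natExtSet (A12 D2 F1 ∪ A21 D1 F2)

/-- `marg_1(D)`. -/
def marg1 (D : Set (X1 × X2 → ℝ)) : Set (X1 → ℝ) :=
  {f | IsGamble f ∧ (fun p : X1 × X2 => f p.1) ∈ D}

/-- `marg_2(D)`. -/
def marg2 (D : Set (X1 × X2 → ℝ)) : Set (X2 → ℝ) :=
  {f | IsGamble f ∧ (fun p : X1 × X2 => f p.2) ∈ D}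

/-- `marg_1(D|B2)`. -/
def marg1c (D : Set (X1 × X2 → ℝ)) (B2 : Set X2) : Set (X1 → ℝ) :=
  {f | IsGamble f ∧ (fun p : X1 × X2 => f p.1 * ind B2 p.2) ∈ D}

/-- `marg_2(D|B1)`. -/
def marg2c (D : Set (X1 × X2 → ℝ)) (B1 : Set X1) : Set (X2 → ℝ) :=
  {f | IsGamble f ∧ (fun p : X1 × X2 => f p.2 * ind B1 p.1) ∈ D}

/-- Epistemic independence of a set of desirable gambles on `X1 × X2`. -/
def EpIndSDG (F1 : Set (Set X1)) (F2 : Set (Set X2)) (D : Set (X1 × X2 → ℝ)) : Prop :=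
  (∀ B2 ∈ F2, marg1c D B2 = marg1 D) ∧ (∀ B1 ∈ F1, marg2c D B1 = marg2 D)

/-- Independent product (of sets of desirable gambles). -/
def IndProductSDG (F1 : Set (Set X1)) (F2 : Set (Set X2))
    (D1 : Set (X1 → ℝ)) (D2 : Set (X2 → ℝ)) (D : Set (X1 × X2 → ℝ)) : Prop :=
  CoherentSDG D ∧ EpIndSDG F1 F2 D ∧ marg1 D = D1 ∧ marg2 D = D2

/-- The independent natural extension `lp1 ⊗ lp2` on `C(X1 × X2)`. -/
noncomputable def lpProd (C1 : Set ((X1 → ℝ) × Set X1)) (lp1 : (X1 → ℝ) → Set X1 → EReal)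
    (C2 : Set ((X2 → ℝ) × Set X2)) (lp2 : (X2 → ℝ) → Set X2 → EReal)
    (F1 : Set (Set X1)) (F2 : Set (Set X2)) :
    (X1 × X2 → ℝ) → Set (X1 × X2) → EReal :=
  lpOf (indNatExt (ElpSet C1 lp1) (ElpSet C2 lp2) F1 F2)

/-- An independent domain `C ⊆ C(X1 × X2)`. -/
def IndepDomain (F1 : Set (Set X1)) (F2 : Set (Set X2))
    (C : Set ((X1 × X2 → ℝ) × Set (X1 × X2))) : Prop :=
  (∀ (f1 : X1 → ℝ) (B1 : Set X1), IsGamble f1 → B1.Nonempty → ∀ B2 ∈ F2,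
    (((fun p : X1 × X2 => f1 p.1), B1 ×ˢ (Set.univ : Set X2)) ∈ C ↔
      ((fun p : X1 × X2 => f1 p.1), B1 ×ˢ B2) ∈ C)) ∧
  (∀ (f2 : X2 → ℝ) (B2 : Set X2), IsGamble f2 → B2.Nonempty → ∀ B1 ∈ F1,
    (((fun p : X1 × X2 => f2 p.2), (Set.univ : Set X1) ×ˢ B2) ∈ C ↔
      ((fun p : X1 × X2 => f2 p.2), B1 ×ˢ B2) ∈ C))

/-- Epistemic independence of a conditional lower prevision on a domain `C`. -/
def EpIndLP (F1 : Set (Set X1)) (F2 : Set (Set X2))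
    (C : Set ((X1 × X2 → ℝ) × Set (X1 × X2)))
    (lp : (X1 × X2 → ℝ) → Set (X1 × X2) → EReal) : Prop :=
  (∀ (f1 : X1 → ℝ) (B1 : Set X1), IsGamble f1 → B1.Nonempty →
    ((fun p : X1 × X2 => f1 p.1), B1 ×ˢ (Set.univ : Set X2)) ∈ C → ∀ B2 ∈ F2,
    lp (fun p : X1 × X2 => f1 p.1) (B1 ×ˢ (Set.univ : Set X2)) =
      lp (fun p : X1 × X2 => f1 p.1) (B1 ×ˢ B2)) ∧
  (∀ (f2 : X2 → ℝ) (B2 : Set X2), IsGamble f2 → B2.Nonempty →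
    ((fun p : X1 × X2 => f2 p.2), (Set.univ : Set X1) ×ˢ B2) ∈ C → ∀ B1 ∈ F1,
    lp (fun p : X1 × X2 => f2 p.2) ((Set.univ : Set X1) ×ˢ B2) =
      lp (fun p : X1 × X2 => f2 p.2) (B1 ×ˢ B2))

/-- Independent product of two conditional lower previsions, on the joint domain `C`. -/
def IndProductLP (F1 : Set (Set X1)) (F2 : Set (Set X2))
    (C1 : Set ((X1 → ℝ) × Set X1)) (lp1 : (X1 → ℝ) → Set X1 → EReal)
    (C2 : Set ((X2 → ℝ) × Set X2)) (lp2 : (X2 → ℝ) → Set X2 → EReal)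
    (C : Set ((X1 × X2 → ℝ) × Set (X1 × X2)))
    (lp : (X1 × X2 → ℝ) → Set (X1 × X2) → EReal) : Prop :=
  Coherent C lp ∧ EpIndLP F1 F2 C lp ∧
  (∀ p ∈ C1, lp (fun q : X1 × X2 => p.1 q.1) (p.2 ×ˢ (Set.univ : Set X2)) = lp1 p.1 p.2) ∧
  (∀ p ∈ C2, lp (fun q : X1 × X2 => p.1 q.2) ((Set.univ : Set X1) ×ˢ p.2) = lp2 p.1 p.2)

end Product


section Aux
variable {X : Type*}

lemma isGamble_const (c : ℝ) : IsGamble (fun _ : X => c) := ⟨|c|, fun _ => le_rfl⟩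

lemma isGamble_zero : IsGamble (0 : X → ℝ) := ⟨0, fun _ => by simp⟩

lemma IsGamble.add {f g : X → ℝ} (hf : IsGamble f) (hg : IsGamble g) : IsGamble (f + g) := by
  obtain ⟨M, hM⟩ := hf; obtain ⟨N, hN⟩ := hg
  exact ⟨M + N, fun x => (abs_add_le _ _).trans (add_le_add (hM x) (hN x))⟩

lemma IsGamble.neg {f : X → ℝ} (hf : IsGamble f) : IsGamble (-f) := by
  obtain ⟨M, hM⟩ := hf; exact ⟨M, fun x => by simpa using hM x⟩

lemma IsGamble.sub {f g : X → ℝ} (hf : IsGamble f) (hg : IsGamble g) : IsGamble (f - g) := by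
  simpa [sub_eq_add_neg] using hf.add hg.neg

lemma IsGamble.smul {f : X → ℝ} (hf : IsGamble f) (c : ℝ) : IsGamble (c • f) := by
  obtain ⟨M, hM⟩ := hf
  exact ⟨|c| * M, fun x => by
    simp only [Pi.smul_apply, smul_eq_mul, abs_mul]
    exact mul_le_mul_of_nonneg_left (hM x) (abs_nonneg c)⟩

lemma IsGamble.mul {f g : X → ℝ} (hf : IsGamble f) (hg : IsGamble g) :
    IsGamble (fun x => f x * g x) := by
  obtain ⟨M, hM⟩ := hf; obtain ⟨N, hN⟩ := hg
  refine ⟨|M| * |N|, fun x => ?_⟩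
  rw [abs_mul]
  exact mul_le_mul ((hM x).trans (le_abs_self M)) ((hN x).trans (le_abs_self N))
    (abs_nonneg _) (abs_nonneg _)

lemma isGamble_sum {ι : Type*} (s : Finset ι) (f : ι → X → ℝ)
    (h : ∀ i ∈ s, IsGamble (f i)) : IsGamble (∑ i ∈ s, f i) :=
  Finset.sum_induction f IsGamble (fun _ _ => IsGamble.add) isGamble_zero h

lemma ind_nonneg (B : Set X) (x : X) : 0 ≤ ind B x := by
  unfold ind; by_cases h : x ∈ B <;> simp [h]

lemma ind_le_one (B : Set X) (x : X) : ind B x ≤ 1 := by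
  unfold ind; by_cases h : x ∈ B <;> simp [h]

lemma isGamble_ind (B : Set X) : IsGamble (ind B) :=
  ⟨1, fun x => abs_le.mpr ⟨by linarith [ind_nonneg B x], ind_le_one B x⟩⟩

lemma ind_univ : ind (Set.univ : Set X) = fun _ => 1 := by
  funext x; simp [ind]

lemma ind_mem {B : Set X} {x : X} (h : x ∈ B) : ind B x = 1 := by simp [ind, h]

/-! ### The real-valued lower prevision associated to a set of gambles -/

/-- `Sset D f`: the set of acceptable buying prices. -/
def Sset (D : Set (X → ℝ)) (f : X → ℝ) : Set ℝ := {m | (fun x => f x - m) ∈ D}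

/-- Real-valued unconditional lower prevision of `D`. -/
noncomputable def Lr (D : Set (X → ℝ)) (f : X → ℝ) : ℝ := sSup (Sset D f)

variable {D : Set (X → ℝ)}

lemma mem_of_pos_le [Nonempty X]
    (hd1 : ∀ f : X → ℝ, IsGamble f → 0 ≤ f → f ≠ 0 → f ∈ D)
    {h : X → ℝ} (hgam : IsGamble h) {c : ℝ} (hc : 0 < c) (hge : ∀ x, c ≤ h x) : h ∈ D := by
  refine hd1 h hgam (fun x => (hc.le.trans (hge x))) ?_
  intro h0
  obtain ⟨x0⟩ := ‹Nonempty X›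
  have : h x0 = 0 := congrFun h0 x0
  linarith [hge x0]

lemma const_mem [Nonempty X]
    (hd1 : ∀ f : X → ℝ, IsGamble f → 0 ≤ f → f ≠ 0 → f ∈ D)
    {c : ℝ} (hc : 0 < c) : (fun _ : X => c) ∈ D :=
  mem_of_pos_le hd1 (isGamble_const c) hc (fun _ => le_rfl)

lemma Sset_nonempty [Nonempty X]
    (hd1 : ∀ f : X → ℝ, IsGamble f → 0 ≤ f → f ≠ 0 → f ∈ D)
    {f : X → ℝ} (hf : IsGamble f) : (Sset D f).Nonempty := by
  obtain ⟨M, hM⟩ := hf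
  refine ⟨-M - 1, ?_⟩
  refine mem_of_pos_le hd1 (IsGamble.sub ⟨M, hM⟩ (isGamble_const (-M-1))) (c := 1) one_pos
    (fun x => ?_)
  have h1 := (abs_le.mp (hM x)).1
  show 1 ≤ f x - (-M - 1)
  linarith

lemma Sset_bddAbove (hD : CoherentSDG D) {f : X → ℝ} (hf : IsGamble f) :
    BddAbove (Sset D f) := by
  obtain ⟨M, hM⟩ := hf
  refine ⟨M, fun m hm => ?_⟩
  by_contra hlt
  push_neg at hlt
  refine hD.d4 _ (fun x => ?_) hm
  have := (abs_le.mp (hM x)).2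
  show f x - m ≤ 0
  linarith

lemma Sset_down [Nonempty X] (hD : CoherentSDG D) {f : X → ℝ} {m m' : ℝ}
    (hm : m ∈ Sset D f) (hle : m' ≤ m) : m' ∈ Sset D f := by
  rcases eq_or_lt_of_le hle with rfl | hlt
  · exact hm
  · have : (fun x => f x - m') = (fun x => f x - m) + (fun _ => m - m') := by
      funext x; simp only [Pi.add_apply]; ring
    rw [Sset, Set.mem_setOf_eq, this]
    exact hD.d3 _ hm _ (const_mem hD.d1 (by linarith))

lemma lt_Lr_mem [Nonempty X] (hD : CoherentSDG D) {f : X → ℝ} (hf : IsGamble f)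
    {m : ℝ} (h : m < Lr D f) : m ∈ Sset D f := by
  obtain ⟨a, ha, hma⟩ := exists_lt_of_lt_csSup (Sset_nonempty hD.d1 hf) h
  exact Sset_down hD ha hma.le

lemma le_Lr (hD : CoherentSDG D) {f : X → ℝ} (hf : IsGamble f)
    {m : ℝ} (hm : m ∈ Sset D f) : m ≤ Lr D f :=
  le_csSup (Sset_bddAbove hD hf) hm

lemma le_Lr_of_forall_lt (hD : CoherentSDG D) {f : X → ℝ} (hf : IsGamble f)
    {m : ℝ} (h : ∀ m' < m, m' ∈ Sset D f) : m ≤ Lr D f := by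
  refine le_of_forall_lt fun c hc => ?_
  obtain ⟨c', hc1, hc2⟩ := exists_between hc
  exact lt_of_lt_of_le hc1 (le_Lr hD hf (h c' hc2))

lemma const_mem_iff [Nonempty X] (hD : CoherentSDG D) {c : ℝ} :
    (fun _ : X => c) ∈ D ↔ 0 < c := by
  constructor
  · intro h
    by_contra hc
    push_neg at hc
    exact hD.d4 _ (fun x => hc) h
  · exact fun hc => const_mem hD.d1 hc

lemma Lr_const [Nonempty X] (hD : CoherentSDG D) (c : ℝ) :
    Lr D (fun _ : X => c) = c := by
  have : Sset D (fun _ : X => c) = Set.Iio c := by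
    ext m
    simp only [Sset, Set.mem_setOf_eq, Set.mem_Iio]
    rw [const_mem_iff hD]
    constructor <;> intro <;> linarith
  rw [Lr, this, csSup_Iio]

lemma Lr_zero [Nonempty X] (hD : CoherentSDG D) : Lr D (0 : X → ℝ) = 0 := by
  have : (0 : X → ℝ) = (fun _ : X => (0:ℝ)) := rfl
  rw [this, Lr_const hD]

end Aux

section Aux2
variable {X : Type*} {D : Set (X → ℝ)}

lemma Lr_superadd [Nonempty X] (hD : CoherentSDG D) {f g : X → ℝ}
    (hf : IsGamble f) (hg : IsGamble g) :
    Lr D f + Lr D g ≤ Lr D (f + g) := by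
  refine le_of_forall_pos_le_add fun ε hε => ?_
  have h1 : Lr D f - ε/2 ∈ Sset D f := lt_Lr_mem hD hf (by linarith)
  have h2 : Lr D g - ε/2 ∈ Sset D g := lt_Lr_mem hD hg (by linarith)
  have h3 : (Lr D f - ε/2) + (Lr D g - ε/2) ∈ Sset D (f + g) := by
    show (fun x => (f + g) x - _) ∈ D
    have : (fun x => (f + g) x - ((Lr D f - ε/2) + (Lr D g - ε/2)))
        = (fun x => f x - (Lr D f - ε/2)) + (fun x => g x - (Lr D g - ε/2)) := by
      funext x; simp only [Pi.add_apply]; ring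
    rw [this]
    exact hD.d3 _ h1 _ h2
  have := le_Lr hD (hf.add hg) h3
  linarith

lemma Lr_smul_le [Nonempty X] (hD : CoherentSDG D) {f : X → ℝ} (hf : IsGamble f)
    {c : ℝ} (hc : 0 < c) : c * Lr D f ≤ Lr D (c • f) := by
  refine le_of_forall_pos_le_add fun ε hε => ?_
  have h1 : Lr D f - ε/c ∈ Sset D f := lt_Lr_mem hD hf (by
    have := div_pos hε hc; linarith)
  have h3 : c * (Lr D f - ε/c) ∈ Sset D (c • f) := by
    show (fun x => (c • f) x - _) ∈ D
    have : (fun x => (c • f) x - c * (Lr D f - ε/c))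
        = c • (fun x => f x - (Lr D f - ε/c)) := by
      funext x; simp only [Pi.smul_apply, smul_eq_mul]; ring
    rw [this]
    exact hD.d2 _ h1 c hc
  have := le_Lr hD (hf.smul c) h3
  have hce : c * (Lr D f - ε/c) = c * Lr D f - ε := by
    field_simp
  linarith [hce ▸ this]

lemma Lr_smul [Nonempty X] (hD : CoherentSDG D) {f : X → ℝ} (hf : IsGamble f)
    {c : ℝ} (hc : 0 < c) : Lr D (c • f) = c * Lr D f := by
  refine le_antisymm ?_ (Lr_smul_le hD hf hc)
  have h2 := Lr_smul_le hD (hf.smul c) (c := c⁻¹) (by positivity)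
  have : c⁻¹ • (c • f) = f := by
    rw [smul_smul, inv_mul_cancel₀ hc.ne', one_smul]
  rw [this] at h2
  calc Lr D (c • f) = c * (c⁻¹ * Lr D (c • f)) := by field_simp
    _ ≤ c * Lr D f := by nlinarith

lemma Lr_lipschitz [Nonempty X] (hD : CoherentSDG D) {f f' : X → ℝ}
    (hf : IsGamble f) (hf' : IsGamble f') {c : ℝ}
    (h : ∀ x, f x - c ≤ f' x) : Lr D f - c ≤ Lr D f' := by
  have key : ∀ ε > 0, Lr D f - c ≤ Lr D f' + ε := by
    intro ε hε
    have h1 : Lr D f - ε/2 ∈ Sset D f := lt_Lr_mem hD hf (by linarith)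
    have h3 : Lr D f - ε - c ∈ Sset D f' := by
      show (fun x => f' x - _) ∈ D
      have heq : (fun x => f' x - (Lr D f - ε - c))
          = (fun x => f x - (Lr D f - ε/2)) + ((f' - f) + fun _ => c + ε/2) := by
        funext x; simp only [Pi.add_apply, Pi.sub_apply]; ring
      rw [heq]
      refine hD.d3 _ h1 _ ?_
      refine mem_of_pos_le hD.d1 ((hf'.sub hf).add (isGamble_const (c + ε/2)))
        (c := ε/2) (by linarith) (fun x => ?_)
      show ε/2 ≤ f' x - f x + (c + ε/2)
      linarith [h x]
    have := le_Lr hD hf' h3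
    linarith
  by_contra hcon
  push_neg at hcon
  have := key ((Lr D f - c - Lr D f') / 2) (by linarith)
  linarith

lemma Lr_nonneg_of_nonneg [Nonempty X]
    (hd1 : ∀ f : X → ℝ, IsGamble f → 0 ≤ f → f ≠ 0 → f ∈ D)
    {f : X → ℝ} (hf : IsGamble f) (h0 : ∀ x, 0 ≤ f x)
    (hbdd : BddAbove (Sset D f)) : 0 ≤ Lr D f := by
  have key : ∀ ε > 0, (0:ℝ) ≤ Lr D f + ε := by
    intro ε hε
    have : -ε ∈ Sset D f := by
      refine mem_of_pos_le hd1 (hf.sub (isGamble_const (-ε))) (c := ε) hε (fun x => ?_)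
      show ε ≤ f x - (-ε); linarith [h0 x]
    have := le_csSup hbdd this
    simp only [Lr]; linarith
  by_contra hcon
  push_neg at hcon
  have := key (-(Lr D f)/2) (by linarith)
  linarith

lemma Lr_nonneg_of_mem [Nonempty X] (hD : CoherentSDG D) {f : X → ℝ}
    (hmem : f ∈ D) : 0 ≤ Lr D f := by
  have hf : IsGamble f := hD.subset_gambles f hmem
  have key : ∀ ε > 0, (0:ℝ) ≤ Lr D f + ε := by
    intro ε hε
    have : -ε ∈ Sset D f := by
      show (fun x => f x - (-ε)) ∈ D
      have : (fun x => f x - (-ε)) = f + (fun _ => ε) := by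
        funext x; simp only [Pi.add_apply]; ring
      rw [this]
      exact hD.d3 _ hmem _ (const_mem hD.d1 hε)
    have := le_Lr hD hf this
    linarith
  by_contra hcon
  push_neg at hcon
  have := key (-(Lr D f)/2) (by linarith)
  linarith

lemma Lr_neg_le [Nonempty X] (hD : CoherentSDG D) {f : X → ℝ} (hf : IsGamble f) :
    Lr D f + Lr D (-f) ≤ 0 := by
  have := Lr_superadd hD hf hf.neg
  have heq : f + (-f) = (fun _ : X => (0:ℝ)) := by funext x; simp
  rw [heq, Lr_const hD] at this
  exact this

/-! ### EReal bridge -/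

lemma sSup_image_toEReal {S : Set ℝ} (hne : S.Nonempty) (hb : BddAbove S) :
    sSup (Real.toEReal '' S) = ((sSup S : ℝ) : EReal) := by
  apply IsLUB.sSup_eq
  constructor
  · rintro x ⟨m, hm, rfl⟩
    exact_mod_cast le_csSup hb hm
  · intro b hb'
    induction b with
    | bot =>
        obtain ⟨m, hm⟩ := hne
        have := hb' ⟨m, hm, rfl⟩
        simp at this
    | coe r =>
        have : sSup S ≤ r := csSup_le hne (fun m hm => by exact_mod_cast hb' ⟨m, hm, rfl⟩)
        exact_mod_cast this
    | top => exact le_top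

lemma lpOf_univ (D : Set (X → ℝ)) (f : X → ℝ) :
    lpOf D f Set.univ = sSup (Real.toEReal '' Sset D f) := by
  have hset : {m : ℝ | (fun x => (f x - m) * ind (Set.univ : Set X) x) ∈ D} = Sset D f := by
    ext m
    have heq : (fun x => (f x - m) * ind (Set.univ : Set X) x) = fun x => f x - m := by
      funext x; simp [ind_univ]
    simp only [Set.mem_setOf_eq, Sset, heq]
  rw [lpOf, hset]

lemma lpOf_univ_coe [Nonempty X] (hD : CoherentSDG D) {f : X → ℝ} (hf : IsGamble f) :
    lpOf D f Set.univ = ((Lr D f : ℝ) : EReal) := by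
  rw [lpOf_univ, Lr, sSup_image_toEReal (Sset_nonempty hD.d1 hf) (Sset_bddAbove hD hf)]

/-! ### posi lemmas -/

lemma mem_posi {A : Set (X → ℝ)} {a : X → ℝ} (ha : a ∈ A) : a ∈ posi A :=
  ⟨0, fun _ => 1, fun _ => a, fun _ => one_pos, fun _ => ha, by simp⟩

lemma posi_smul {A : Set (X → ℝ)} {f : X → ℝ} (hf : f ∈ posi A) {c : ℝ} (hc : 0 < c) :
    c • f ∈ posi A := by
  obtain ⟨n, l, h, hl, hh, rfl⟩ := hf
  refine ⟨n, fun i => c * l i, h, fun i => mul_pos hc (hl i), hh, ?_⟩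
  rw [Finset.smul_sum]
  exact Finset.sum_congr rfl (fun i _ => by rw [smul_smul])

lemma posi_add {A : Set (X → ℝ)} {f g : X → ℝ} (hf : f ∈ posi A) (hg : g ∈ posi A) :
    f + g ∈ posi A := by
  obtain ⟨n, l, h, hl, hh, rfl⟩ := hf
  obtain ⟨n', l', h', hl', hh', rfl⟩ := hg
  have e : Fin (n+1) ⊕ Fin (n'+1) ≃ Fin ((n + n' + 1) + 1) :=
    finSumFinEquiv.trans (finCongr (by omega))
  refine ⟨n + n' + 1, (Sum.elim l l') ∘ e.symm, (Sum.elim h h') ∘ e.symm,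
    fun i => ?_, fun i => ?_, ?_⟩
  · simp only [Function.comp_apply]
    rcases e.symm i with j | j
    · exact hl j
    · exact hl' j
  · simp only [Function.comp_apply]
    rcases e.symm i with j | j
    · exact hh j
    · exact hh' j
  · have := Equiv.sum_comp e.symm
      (fun j => (Sum.elim l l') j • (Sum.elim h h') j)
    rw [show (∑ i : Fin ((n + n' + 1) + 1),
        ((Sum.elim l l') ∘ e.symm) i • ((Sum.elim h h') ∘ e.symm) i)
      = ∑ i : Fin ((n + n' + 1) + 1),
        (fun j => (Sum.elim l l') j • (Sum.elim h h') j) (e.symm i) from rfl]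
    rw [Equiv.sum_comp e.symm (fun j => (Sum.elim l l') j • (Sum.elim h h') j)]
    rw [Fintype.sum_sum_type]
    simp

lemma posi_subset {A : Set (X → ℝ)} (hD : CoherentSDG D) (hsub : A ⊆ D) :
    posi A ⊆ D := by
  rintro f ⟨n, l, h, hl, hh, rfl⟩
  induction n with
  | zero =>
      rw [Fin.sum_univ_one]
      exact hD.d2 _ (hsub (hh 0)) _ (hl 0)
  | succ n ih =>
      rw [Fin.sum_univ_castSucc]
      exact hD.d3 _ (ih (fun i => l i.castSucc) (fun i => h i.castSucc)
        (fun i => hl _) (fun i => hh _)) _ (hD.d2 _ (hsub (hh _)) _ (hl _))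

lemma posi_gambles {A : Set (X → ℝ)} (hA : ∀ a ∈ A, IsGamble a) :
    ∀ f ∈ posi A, IsGamble f := by
  rintro f ⟨n, l, h, hl, hh, rfl⟩
  exact isGamble_sum _ _ (fun i _ => (hA _ (hh i)).smul (l i))

lemma sum_mem_or_zero_add {M : Set (X → ℝ)}
    (hadd : ∀ a ∈ M, ∀ b ∈ M, a + b ∈ M) {n : ℕ} {q : Fin n → X → ℝ}
    (hq : ∀ i, q i ∈ M ∨ q i = 0) {w : X → ℝ} (hw : w ∈ M) :
    (∑ i, q i) + w ∈ M := by
  induction n generalizing w with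
  | zero => simpa using hw
  | succ n ih =>
      rw [Fin.sum_univ_castSucc, add_assoc]
      rcases hq (Fin.last n) with h | h
      · exact ih (fun i => hq i.castSucc) (hadd _ h _ hw)
      · rw [h, zero_add]
        exact ih (fun i => hq i.castSucc) hw

end Aux2

section Aux3
variable {X : Type*}

lemma coherent_natExtSet [Nonempty X] {A : Set (X → ℝ)}
    (hA : ∀ a ∈ A, IsGamble a) {D' : Set (X → ℝ)} (hD' : CoherentSDG D')
    (hsub : A ⊆ D') : CoherentSDG (natExtSet A) := by
  have hAG : ∀ a ∈ A ∪ Gpos X, IsGamble a := by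
    rintro a (ha | ha)
    · exact hA a ha
    · exact ha.1
  have hsubG : A ∪ Gpos X ⊆ D' := by
    rintro a (ha | ha)
    · exact hsub ha
    · exact hD'.d1 a ha.1 ha.2.1 ha.2.2
  refine ⟨posi_gambles hAG, ?_, ?_, ?_, ?_⟩
  · intro f hf h0 hne
    exact mem_posi (Or.inr ⟨hf, h0, hne⟩)
  · intro f hf l hl
    exact posi_smul hf hl
  · intro f hf g hg
    exact posi_add hf hg
  · intro f hf hmem
    exact hD'.d4 f hf (posi_subset hD' hsubG hmem)

lemma Alp_subset {C : Set ((X → ℝ) × Set X)} (hC : C ⊆ domC X)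
    {lp : (X → ℝ) → Set X → EReal} {D' : Set (X → ℝ)} (hD' : CoherentSDG D')
    (heq : ∀ p ∈ C, lp p.1 p.2 = lpOf D' p.1 p.2) :
    Alp C lp ⊆ D' := by
  rintro a ⟨p, hp, m, hm, rfl⟩
  rw [heq p hp, lpOf] at hm
  obtain ⟨_, ⟨m'', hm'', rfl⟩, hlt⟩ := lt_sSup_iff.mp hm
  have hmm : m < m'' := by exact_mod_cast hlt
  have hkey : (fun x => (p.1 x - m) * ind p.2 x)
      = (fun x => (p.1 x - m'') * ind p.2 x) + (fun x => (m'' - m) * ind p.2 x) := by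
    funext x; simp only [Pi.add_apply]; ring
  rw [hkey]
  refine hD'.d3 _ hm'' _ ?_
  obtain ⟨x0, hx0⟩ := (hC hp).2
  refine hD'.d1 _ ((isGamble_const (m'' - m)).mul (isGamble_ind p.2))
    (fun x => mul_nonneg (by linarith) (ind_nonneg _ _)) ?_
  intro h0
  have := congrFun h0 x0
  rw [ind_mem hx0] at this
  simp only [Pi.zero_apply, mul_one] at this
  linarith

lemma Alp_gambles {C : Set ((X → ℝ) × Set X)} (hC : C ⊆ domC X)
    (lp : (X → ℝ) → Set X → EReal) : ∀ a ∈ Alp C lp, IsGamble a := by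
  rintro a ⟨p, hp, m, hm, rfl⟩
  exact ((hC hp).1.sub (isGamble_const m)).mul (isGamble_ind p.2)

lemma coherent_ElpSet [Nonempty X] {C : Set ((X → ℝ) × Set X)} (hC : C ⊆ domC X)
    {lp : (X → ℝ) → Set X → EReal} (hlp : Coherent C lp) :
    CoherentSDG (ElpSet C lp) := by
  obtain ⟨D', hD', heq⟩ := hlp
  exact coherent_natExtSet (Alp_gambles hC lp) hD' (Alp_subset hC hD' heq)

end Aux3

section Aux4
variable {X : Type*}

/-- The submodule of bounded functions. -/
def bddE (X : Type*) : Submodule ℝ (X → ℝ) where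
  carrier := {f | IsGamble f}
  add_mem' := fun hf hg => hf.add hg
  zero_mem' := isGamble_zero
  smul_mem' := fun c _ hf => hf.smul c

lemma bddE_isGamble (x : bddE X) : IsGamble (x : X → ℝ) := x.2

lemma IsGamble.comp {Y : Type*} {f : X → ℝ} (hf : IsGamble f) (φ : Y → X) :
    IsGamble (fun y => f (φ y)) := by
  obtain ⟨M, hM⟩ := hf; exact ⟨M, fun y => hM (φ y)⟩

/-- Hahn–Banach: a linear functional between the lower and upper prevision of a
coherent set, matching the lower prevision at `k`. -/
lemma exists_P2 [Nonempty X] {D2 : Set (X → ℝ)} (hD2 : CoherentSDG D2)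
    {k : X → ℝ} (hk : IsGamble k) :
    ∃ P2 : bddE X →ₗ[ℝ] ℝ,
      (∀ x : bddE X, Lr D2 (x : X → ℝ) ≤ P2 x) ∧
      (∀ x : bddE X, P2 x ≤ -(Lr D2 (-(x : X → ℝ)))) ∧
      P2 ⟨k, hk⟩ = Lr D2 k := by
  set N : bddE X → ℝ := fun x => -(Lr D2 (-(x : X → ℝ))) with hN
  have hNhom : ∀ c : ℝ, 0 < c → ∀ x : bddE X, N (c • x) = c * N x := by
    intro c hc x
    have hco : (-(↑(c • x) : X → ℝ)) = c • (-(x : X → ℝ)) := by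
      rw [Submodule.coe_smul, smul_neg]
    rw [hN]
    simp only
    rw [hco, Lr_smul hD2 (bddE_isGamble x).neg hc]
    ring
  have hNadd : ∀ x y : bddE X, N (x + y) ≤ N x + N y := by
    intro x y
    have h1 := Lr_superadd hD2 (bddE_isGamble x).neg (bddE_isGamble y).neg
    have hco : (-(↑(x + y) : X → ℝ)) = (-(x : X → ℝ)) + (-(y : X → ℝ)) := by
      rw [Submodule.coe_add]; ring
    rw [hN]; simp only
    rw [hco]
    linarith
  -- build partial map
  by_cases hk0 : k = 0
  · -- use span of the constant 1
    have h1g : IsGamble (fun _ : X => (1:ℝ)) := isGamble_const 1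
    set oneE : bddE X := ⟨fun _ => 1, h1g⟩ with honeE
    have hone0 : oneE ≠ 0 := by
      intro h
      obtain ⟨x0⟩ := ‹Nonempty X›
      have := congrFun (congrArg (Subtype.val) h) x0
      simp [honeE] at this
    set p := LinearPMap.mkSpanSingleton (K := ℝ) (L := ℝ) (σ := RingHom.id ℝ) oneE (1:ℝ) hone0 with hp
    have hf : ∀ x : p.domain, p x ≤ N x := by
      intro x
      obtain ⟨c, hc⟩ := Submodule.mem_span_singleton.mp x.2
      have hx : x = ⟨c • oneE, by rw [hc]; exact x.2⟩ := Subtype.ext hc.symm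
      rw [hx]
      rw [LinearPMap.mkSpanSingleton'_apply, RingHom.id_apply]
      have hco : (-(↑(c • oneE) : X → ℝ)) = (fun _ : X => -c) := by
        funext x'; simp [honeE]
      rw [hN]; simp only [hco, Lr_const hD2, smul_eq_mul, mul_one, neg_neg, le_refl]
    obtain ⟨P2, hext, hle⟩ := exists_extension_of_le_sublinear p N hNhom hNadd hf
    refine ⟨P2, ?_, hle, ?_⟩
    · intro x
      have h2 := hle (-x)
      rw [map_neg] at h2
      have hco : (-(↑(-x) : X → ℝ)) = (x : X → ℝ) := by
        rw [Submodule.coe_neg, neg_neg]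
      rw [hN] at h2; simp only [hco] at h2
      linarith
    · have hkE : (⟨k, hk⟩ : bddE X) = 0 := Subtype.ext hk0
      rw [hkE, map_zero, hk0, Lr_zero hD2]
  · -- span of k
    have hkE0 : (⟨k, hk⟩ : bddE X) ≠ 0 := by
      intro h; exact hk0 (congrArg Subtype.val h)
    set kE : bddE X := ⟨k, hk⟩ with hkE
    set p := LinearPMap.mkSpanSingleton (K := ℝ) (L := ℝ) (σ := RingHom.id ℝ) kE (Lr D2 k) hkE0 with hp
    have hf : ∀ x : p.domain, p x ≤ N x := by
      intro x
      obtain ⟨c, hc⟩ := Submodule.mem_span_singleton.mp x.2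
      have hx : x = ⟨c • kE, by rw [hc]; exact x.2⟩ := Subtype.ext hc.symm
      rw [hx, LinearPMap.mkSpanSingleton'_apply, RingHom.id_apply]
      have hco : (-(↑(c • kE) : X → ℝ)) = c • (-k) := by
        rw [Submodule.coe_smul, smul_neg, hkE]
      rw [hN]; simp only [hco, smul_eq_mul]
      rcases lt_trichotomy c 0 with hc0 | hc0 | hc0
      · have hco2 : c • (-k) = (-c) • k := by rw [neg_smul, smul_neg]
        rw [hco2, Lr_smul hD2 hk (by linarith)]
        have : -(-c * Lr D2 k) = c * Lr D2 k := by ring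
        rw [this]
      · subst hc0
        have : (0:ℝ) • (-k) = (0 : X → ℝ) := zero_smul _ _
        rw [this, Lr_zero hD2]
        simp
      · rw [Lr_smul hD2 hk.neg hc0]
        have h2 := Lr_neg_le hD2 hk
        nlinarith
    obtain ⟨P2, hext, hle⟩ := exists_extension_of_le_sublinear p N hNhom hNadd hf
    refine ⟨P2, ?_, hle, ?_⟩
    · intro x
      have h2 := hle (-x)
      rw [map_neg] at h2
      have hco : (-(↑(-x) : X → ℝ)) = (x : X → ℝ) := by
        rw [Submodule.coe_neg, neg_neg]
      rw [hN] at h2; simp only [hco] at h2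
      linarith
    · have hmem : kE ∈ p.domain := by
        rw [hp, LinearPMap.domain_mkSpanSingleton]
        exact Submodule.mem_span_singleton_self kE
      have := hext ⟨kE, hmem⟩
      rw [this]
      exact LinearPMap.mkSpanSingleton_apply ℝ ℝ hkE0 (Lr D2 k)

end Aux4

section Aux5
variable {X1 X2 : Type*}

lemma indNatExt_gambles {D1 : Set (X1 → ℝ)} {D2 : Set (X2 → ℝ)}
    (hD1 : CoherentSDG D1) (hD2 : CoherentSDG D2) {F1 : Set (Set X1)} {F2 : Set (Set X2)}
    {h : X1 × X2 → ℝ} (hh : h ∈ (A12 D2 F1 ∪ A21 D1 F2) ∪ Gpos (X1 × X2)) :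
    IsGamble h := by
  rcases hh with (h12 | h21) | hpos
  · obtain ⟨f2, hf2, B1, _, rfl⟩ := h12
    exact ((hD2.subset_gambles f2 hf2).comp Prod.snd).mul ((isGamble_ind B1).comp Prod.fst)
  · obtain ⟨f1, hf1, B2, _, rfl⟩ := h21
    exact ((hD1.subset_gambles f1 hf1).comp Prod.fst).mul ((isGamble_ind B2).comp Prod.snd)
  · exact hpos.1

lemma upper [Nonempty X1] [Nonempty X2]
    {D1 : Set (X1 → ℝ)} {D2 : Set (X2 → ℝ)} (hD1 : CoherentSDG D1) (hD2 : CoherentSDG D2)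
    {F1 : Set (Set X1)} {F2 : Set (Set X2)}
    {g : X1 → ℝ} (hg : IsGamble g)
    {k : X2 → ℝ} (hk : IsGamble k) {m : ℝ}
    (hm : m ∈ Sset (indNatExt D1 D2 F1 F2) (fun p => g p.1 * k p.2)) :
    m ≤ Lr D1 (fun x1 => g x1 * Lr D2 k) := by
  set μ := Lr D2 k with hμ
  obtain ⟨P2, hPge, hPle, hPk⟩ := exists_P2 hD2 hk
  have hPone : P2 ⟨fun _ => 1, isGamble_const 1⟩ = 1 := by
    have h1 := hPge ⟨fun _ => 1, isGamble_const 1⟩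
    have h2 := hPle ⟨fun _ => 1, isGamble_const 1⟩
    have hco : (-(fun _ : X2 => (1:ℝ))) = (fun _ : X2 => (-1:ℝ)) := by funext x; simp
    rw [Lr_const hD2] at h1
    have : Lr D2 (-(fun _ : X2 => (1:ℝ))) = -1 := by rw [hco, Lr_const hD2]
    rw [this] at h2
    linarith
  obtain ⟨n, l, hs, hl, hh, hsum⟩ := hm
  have hgam : ∀ i, IsGamble (hs i) := fun i => indNatExt_gambles hD1 hD2 (hh i)
  set slice : Fin (n+1) → X1 → bddE X2 :=
    fun i x1 => ⟨fun x2 => hs i (x1, x2), (hgam i).comp (fun x2 => (x1, x2))⟩ with hslice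
  have key : ∀ x1, g x1 * μ - m = ∑ i, l i * P2 (slice i x1) := by
    intro x1
    have hlhsg : IsGamble (fun x2 => g x1 * k x2 - m) :=
      (((isGamble_const (g x1)).mul hk).sub (isGamble_const m))
    have hsl : (⟨fun x2 => g x1 * k x2 - m, hlhsg⟩ : bddE X2) = ∑ i, l i • slice i x1 := by
      apply Subtype.ext
      have hco : ((∑ i, l i • slice i x1 : bddE X2) : X2 → ℝ)
          = ∑ i, l i • ((slice i x1 : bddE X2) : X2 → ℝ) := by
        rw [AddSubmonoidClass.coe_finset_sum]
        exact Finset.sum_congr rfl (fun i _ => by rw [Submodule.coe_smul])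
      rw [hco]
      funext x2
      have := congrFun hsum (x1, x2)
      simp only [Finset.sum_apply, Pi.smul_apply, smul_eq_mul] at this ⊢
      exact this
    have hdecomp : (⟨fun x2 => g x1 * k x2 - m, hlhsg⟩ : bddE X2)
        = g x1 • (⟨k, hk⟩ : bddE X2) + (-m) • (⟨fun _ => 1, isGamble_const 1⟩ : bddE X2) := by
      apply Subtype.ext
      funext x2
      simp only [Submodule.coe_add, Submodule.coe_smul, Pi.add_apply, Pi.smul_apply,
        smul_eq_mul]
      ring
    have h1 : P2 (⟨fun x2 => g x1 * k x2 - m, hlhsg⟩ : bddE X2) = g x1 * μ - m := by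
      rw [hdecomp, map_add, map_smul, map_smul, hPk, hPone, smul_eq_mul, smul_eq_mul]
      ring
    rw [← h1, hsl, map_sum]
    apply Finset.sum_congr rfl
    intro i _
    rw [map_smul, smul_eq_mul]
  have hqs : ∀ i, ∃ q : X1 → ℝ, (q ∈ D1 ∨ q = 0) ∧ ∀ x1, q x1 ≤ l i * P2 (slice i x1) := by
    intro i
    rcases hh i with (h12 | h21) | hpos
    · obtain ⟨f2, hf2, B1, _, heq⟩ := h12
      refine ⟨0, Or.inr rfl, fun x1 => ?_⟩
      have hsl2 : slice i x1 = ind B1 x1 • (⟨f2, hD2.subset_gambles f2 hf2⟩ : bddE X2) := by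
        apply Subtype.ext
        funext x2
        simp only [hslice, heq, Submodule.coe_smul, Pi.smul_apply, smul_eq_mul]
        ring
      rw [hsl2, map_smul, smul_eq_mul]
      have h0 : 0 ≤ P2 ⟨f2, hD2.subset_gambles f2 hf2⟩ :=
        le_trans (Lr_nonneg_of_mem hD2 hf2) (hPge ⟨f2, hD2.subset_gambles f2 hf2⟩)
      have := mul_nonneg (mul_nonneg (hl i).le (ind_nonneg B1 x1)) h0
      simpa [mul_assoc] using this
    · obtain ⟨f1, hf1, B2, _, heq⟩ := h21
      set cB := P2 ⟨ind B2, isGamble_ind B2⟩ with hcBdef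
      have hcB : 0 ≤ cB := by
        refine le_trans ?_ (hPge _)
        exact Lr_nonneg_of_nonneg hD2.d1 (isGamble_ind B2) (ind_nonneg B2)
          (Sset_bddAbove hD2 (isGamble_ind B2))
      have hsl2 : ∀ x1, slice i x1 = f1 x1 • (⟨ind B2, isGamble_ind B2⟩ : bddE X2) := by
        intro x1
        apply Subtype.ext
        funext x2
        simp only [hslice, heq, Submodule.coe_smul, Pi.smul_apply, smul_eq_mul]
      rcases (mul_nonneg (hl i).le hcB).lt_or_eq with hpos' | hzero
      · refine ⟨(l i * cB) • f1, Or.inl (hD1.d2 _ hf1 _ hpos'), fun x1 => ?_⟩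
        rw [hsl2 x1, map_smul, smul_eq_mul]
        apply le_of_eq
        simp only [Pi.smul_apply, smul_eq_mul, ← hcBdef]
        ring
      · refine ⟨0, Or.inr rfl, fun x1 => ?_⟩
        rw [hsl2 x1, map_smul, smul_eq_mul]
        apply le_of_eq
        have : l i * (f1 x1 * cB) = f1 x1 * (l i * cB) := by ring
        rw [Pi.zero_apply, this, ← hzero, mul_zero]
    · refine ⟨0, Or.inr rfl, fun x1 => ?_⟩
      have h0 : 0 ≤ P2 (slice i x1) := by
        refine le_trans ?_ (hPge _)
        refine Lr_nonneg_of_nonneg hD2.d1 ((hgam i).comp _) (fun x2 => hpos.2.1 (x1, x2))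
          (Sset_bddAbove hD2 ((hgam i).comp _))
      rw [Pi.zero_apply]
      exact mul_nonneg (hl i).le h0
  choose q hq1 hq2 using hqs
  have hsum2 : ∀ x1, (∑ i, q i) x1 ≤ g x1 * μ - m := by
    intro x1
    rw [Finset.sum_apply, key x1]
    exact Finset.sum_le_sum (fun i _ => hq2 i x1)
  have hgμ : IsGamble (fun x1 => g x1 * μ) := hg.mul (isGamble_const μ)
  refine le_Lr_of_forall_lt hD1 hgμ (fun m' hm' => ?_)
  have hqg : ∀ i, IsGamble (q i) := by
    intro i
    rcases hq1 i with h | h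
    · exact hD1.subset_gambles _ h
    · rw [h]; exact isGamble_zero
  have hwg : IsGamble ((fun x1 => g x1 * μ - m') - ∑ i, q i) :=
    (hgμ.sub (isGamble_const m')).sub (isGamble_sum _ _ (fun i _ => hqg i))
  have hw : ((fun x1 => g x1 * μ - m') - ∑ i, q i) ∈ D1 := by
    refine mem_of_pos_le hD1.d1 hwg (c := m - m') (by linarith) (fun x1 => ?_)
    have := hsum2 x1
    show m - m' ≤ (g x1 * μ - m') - (∑ i, q i) x1
    linarith
  have hmem := sum_mem_or_zero_add hD1.d3 hq1 hw
  have hfinal : (∑ i, q i) + ((fun x1 => g x1 * μ - m') - ∑ i, q i)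
      = fun x1 => g x1 * μ - m' := by
    funext x1
    simp only [Pi.add_apply, Pi.sub_apply]
    ring
  rw [hfinal] at hmem
  exact hmem

end Aux5

section Aux6
variable {X1 X2 : Type*}

lemma SimpleMeas.isGamble {X : Type*} {Bfam : Set (Set X)} {g : X → ℝ}
    (hg : SimpleMeas Bfam g) : IsGamble g := by
  obtain ⟨c0, n, c, Bs, hc0, hc, hBs, rfl⟩ := hg
  have : ∀ i : Fin n, IsGamble (fun x => c i * ind (Bs i) x) :=
    fun i => (isGamble_const (c i)).mul (isGamble_ind (Bs i))
  have hsum : IsGamble (∑ i, fun x => c i * ind (Bs i) x) :=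
    isGamble_sum _ _ (fun i _ => this i)
  have := (isGamble_const (c0 : ℝ)).add hsum
  obtain ⟨M, hM⟩ := this
  refine ⟨M, fun x => ?_⟩
  have h2 := hM x
  simp only [Pi.add_apply, Finset.sum_apply] at h2
  exact h2

lemma lower_simple [Nonempty X1] [Nonempty X2]
    {D1 : Set (X1 → ℝ)} {D2 : Set (X2 → ℝ)} (hD1 : CoherentSDG D1) (hD2 : CoherentSDG D2)
    {F1 : Set (Set X1)} {F2 : Set (Set X2)}
    {g : X1 → ℝ} (hgs : SimpleMeas F1 g)
    {k : X2 → ℝ} (hk : IsGamble k) {m : ℝ}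
    (hm : m < Lr D1 (fun x1 => g x1 * Lr D2 k)) :
    m ∈ Sset (indNatExt D1 D2 F1 F2) (fun p => g p.1 * k p.2) := by
  set μ := Lr D2 k with hμdef
  have hg : IsGamble g := hgs.isGamble
  obtain ⟨c0, nn, c, Bs, hc0, hc, hBs, hgdef⟩ := hgs
  have hgμ : IsGamble (fun x1 => g x1 * μ) := hg.mul (isGamble_const μ)
  obtain ⟨m1, hm1S, hmm1⟩ := exists_lt_of_lt_csSup (Sset_nonempty hD1.d1 hgμ) hm
  obtain ⟨Mg, hMg⟩ := id hg
  have hMg0 : 0 ≤ Mg := le_trans (abs_nonneg _) (hMg (Classical.arbitrary X1))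
  set η := (m1 - m) / (Mg + 1) with hηdef
  have hη : 0 < η := div_pos (by linarith) (by linarith)
  set μ' := μ - η with hμ'def
  have hkμ' : (fun x2 => k x2 - μ') ∈ D2 := lt_Lr_mem hD2 hk (by rw [hμ'def]; linarith)
  -- the X1-marginal term
  have hw1 : (fun x1 => g x1 * μ' - m) ∈ D1 := by
    have heq : (fun x1 => g x1 * μ' - m)
        = (fun x1 => g x1 * μ - m1) + (fun x1 => (m1 - m) - g x1 * η) := by
      funext x1; simp only [Pi.add_apply, hμ'def]; ring
    rw [heq]
    refine hD1.d3 _ hm1S _ ?_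
    refine mem_of_pos_le hD1.d1
      ((isGamble_const (m1 - m)).sub (hg.mul (isGamble_const η))) (c := η) hη (fun x1 => ?_)
    show η ≤ (m1 - m) - g x1 * η
    have hgle : g x1 ≤ Mg := le_trans (le_abs_self _) (hMg x1)
    have h2 : g x1 * η ≤ Mg * η := mul_le_mul_of_nonneg_right hgle hη.le
    have h3 : (m1 - m) = η * (Mg + 1) := by
      rw [hηdef]; field_simp
    nlinarith
  set D := indNatExt D1 D2 F1 F2 with hD
  have hDadd : ∀ a ∈ D, ∀ b ∈ D, a + b ∈ D := fun a ha b hb => posi_add ha hb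
  -- the A21 term
  have hwmem : (fun p : X1 × X2 => (g p.1 * μ' - m) * ind (Set.univ : Set X2) p.2) ∈ D := by
    apply mem_posi
    left; right
    exact ⟨fun x1 => g x1 * μ' - m, hw1, Set.univ, Or.inr rfl, rfl⟩
  -- the A12 terms
  have hTmem : ∀ i : Fin nn,
      (fun p : X1 × X2 => c i * ((k p.2 - μ') * ind (Bs i) p.1)) ∈ D ∨
      (fun p : X1 × X2 => c i * ((k p.2 - μ') * ind (Bs i) p.1)) = 0 := by
    intro i
    rcases (hc i).lt_or_eq with hci | hci
    · left
      have hbase : (fun p : X1 × X2 => (k p.2 - μ') * ind (Bs i) p.1) ∈ D := by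
        apply mem_posi
        left; left
        exact ⟨fun x2 => k x2 - μ', hkμ', Bs i, Or.inl (hBs i), rfl⟩
      have := posi_smul hbase hci
      have heq : c i • (fun p : X1 × X2 => (k p.2 - μ') * ind (Bs i) p.1)
          = fun p : X1 × X2 => c i * ((k p.2 - μ') * ind (Bs i) p.1) := by
        funext p; simp [smul_eq_mul]
      rwa [heq] at this
    · right
      funext p; simp [← hci]
  have hUmem : (fun p : X1 × X2 => c0 * ((k p.2 - μ') * ind (Set.univ : Set X1) p.1)) ∈ D ∨
      (fun p : X1 × X2 => c0 * ((k p.2 - μ') * ind (Set.univ : Set X1) p.1)) = 0 := by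
    rcases hc0.lt_or_eq with hc0' | hc0'
    · left
      have hbase : (fun p : X1 × X2 => (k p.2 - μ') * ind (Set.univ : Set X1) p.1) ∈ D := by
        apply mem_posi
        left; left
        exact ⟨fun x2 => k x2 - μ', hkμ', Set.univ, Or.inr rfl, rfl⟩
      have := posi_smul hbase hc0'
      have heq : c0 • (fun p : X1 × X2 => (k p.2 - μ') * ind (Set.univ : Set X1) p.1)
          = fun p : X1 × X2 => c0 * ((k p.2 - μ') * ind (Set.univ : Set X1) p.1) := by
        funext p; simp [smul_eq_mul]
      rwa [heq] at this
    · right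
      funext p; simp [← hc0']
  -- assemble
  have hassemble : ((∑ i : Fin nn, fun p : X1 × X2 => c i * ((k p.2 - μ') * ind (Bs i) p.1))
      + ((fun p : X1 × X2 => c0 * ((k p.2 - μ') * ind (Set.univ : Set X1) p.1))
        + (fun p : X1 × X2 => (g p.1 * μ' - m) * ind (Set.univ : Set X2) p.2))) ∈ D := by
    refine sum_mem_or_zero_add hDadd hTmem ?_
    rcases hUmem with h | h
    · exact hDadd _ h _ hwmem
    · rw [h, zero_add]; exact hwmem
  have hfinal : ((∑ i : Fin nn, fun p : X1 × X2 => c i * ((k p.2 - μ') * ind (Bs i) p.1))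
      + ((fun p : X1 × X2 => c0 * ((k p.2 - μ') * ind (Set.univ : Set X1) p.1))
        + (fun p : X1 × X2 => (g p.1 * μ' - m) * ind (Set.univ : Set X2) p.2)))
      = fun p : X1 × X2 => g p.1 * k p.2 - m := by
    funext p
    simp only [Pi.add_apply, Finset.sum_apply, ind_univ]
    have hS : ∑ i : Fin nn, c i * ((k p.2 - μ') * ind (Bs i) p.1)
        = (k p.2 - μ') * ∑ i : Fin nn, c i * ind (Bs i) p.1 := by
      rw [Finset.mul_sum]
      exact Finset.sum_congr rfl (fun i _ => by ring)
    rw [hS]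
    have hgp : g p.1 = c0 + ∑ i : Fin nn, c i * ind (Bs i) p.1 := by rw [hgdef]
    rw [hgp]
    ring
  show (fun x => g x.1 * k x.2 - m) ∈ D
  rw [hfinal] at hassemble
  exact hassemble

end Aux6

section Aux7
variable {X1 X2 : Type*}

lemma lower [Nonempty X1] [Nonempty X2]
    {D1 : Set (X1 → ℝ)} {D2 : Set (X2 → ℝ)} (hD1 : CoherentSDG D1) (hD2 : CoherentSDG D2)
    {F1 : Set (Set X1)} {F2 : Set (Set X2)}
    {g : X1 → ℝ} (hg : IsGamble g) (hgm : BMeas F1 g)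
    {k : X2 → ℝ} (hk : IsGamble k) {m : ℝ}
    (hm : m < Lr D1 (fun x1 => g x1 * Lr D2 k)) :
    m ∈ Sset (indNatExt D1 D2 F1 F2) (fun p => g p.1 * k p.2) := by
  set μ := Lr D2 k with hμdef
  obtain ⟨gs, hgs, hconv⟩ := hgm
  obtain ⟨Mk, hMk⟩ := id hk
  have hMk0 : 0 ≤ Mk := le_trans (abs_nonneg _) (hMk (Classical.arbitrary X2))
  set Δ := Lr D1 (fun x1 => g x1 * μ) - m with hΔdef
  have hΔ : 0 < Δ := by rw [hΔdef]; linarith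
  set ε := Δ / (2 * (Mk + |μ| + 1)) with hεdef
  have hden : 0 < 2 * (Mk + |μ| + 1) := by positivity
  have hε : 0 < ε := div_pos hΔ hden
  obtain ⟨n, hn⟩ := (Metric.tendstoUniformly_iff.mp hconv ε hε).exists
  have hdist : ∀ x, |g x - gs n x| < ε := by
    intro x; have := hn x; rwa [Real.dist_eq] at this
  have hgsgam : IsGamble (gs n) := (hgs n).2.isGamble
  have hlip : Lr D1 (fun x1 => g x1 * μ) - ε * |μ| ≤ Lr D1 (fun x1 => gs n x1 * μ) := by
    refine Lr_lipschitz hD1 (hg.mul (isGamble_const μ)) (hgsgam.mul (isGamble_const μ))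
      (fun x1 => ?_)
    have h1 : (g x1 - gs n x1) * μ ≤ ε * |μ| := by
      calc (g x1 - gs n x1) * μ ≤ |(g x1 - gs n x1) * μ| := le_abs_self _
        _ = |g x1 - gs n x1| * |μ| := abs_mul _ _
        _ ≤ ε * |μ| := mul_le_mul_of_nonneg_right (hdist x1).le (abs_nonneg μ)
    nlinarith [h1]
  set m'' := m + ε * Mk with hm''def
  have hεsum : ε * (Mk + |μ| + 1) = Δ / 2 := by
    rw [hεdef]; field_simp
  have hm'' : m'' < Lr D1 (fun x1 => gs n x1 * μ) := by
    have h1 : ε * Mk + ε * |μ| < Δ := by nlinarith [abs_nonneg μ]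
    have h2 : Lr D1 (fun x1 => g x1 * μ) = m + Δ := by rw [hΔdef]; ring
    rw [hm''def]
    linarith [hlip, h2 ▸ hlip]
  have hsimple := lower_simple hD1 hD2 (F2 := F2) (hgs n).2 hk hm''
  set r := fun p : X1 × X2 => (g p.1 - gs n p.1) * k p.2 + (m'' - m) with hrdef
  have hr0 : ∀ p, 0 ≤ r p := by
    intro p
    have h1 : |(g p.1 - gs n p.1) * k p.2| ≤ ε * Mk := by
      rw [abs_mul]
      exact mul_le_mul (hdist p.1).le (hMk p.2) (abs_nonneg _) hε.le
    have h2 := (abs_le.mp h1).1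
    show 0 ≤ (g p.1 - gs n p.1) * k p.2 + (m'' - m)
    rw [hm''def]
    linarith
  have hrgam : IsGamble r := by
    refine IsGamble.add ?_ (isGamble_const (m'' - m))
    exact ((hg.sub hgsgam).comp Prod.fst).mul (hk.comp Prod.snd)
  have hrD : r ∈ indNatExt D1 D2 F1 F2 ∨ r = 0 := by
    by_cases hr : r = 0
    · exact Or.inr hr
    · exact Or.inl (mem_posi (Or.inr ⟨hrgam, fun p => hr0 p, hr⟩))
  have hfinal : (fun x : X1 × X2 => g x.1 * k x.2 - m)
      = (fun x : X1 × X2 => gs n x.1 * k x.2 - m'') + r := by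
    funext p
    simp only [Pi.add_apply, hrdef]
    ring
  show (fun x : X1 × X2 => g x.1 * k x.2 - m) ∈ indNatExt D1 D2 F1 F2
  rw [hfinal]
  rcases hrD with h | h
  · exact posi_add hsimple h
  · rw [h, add_zero]; exact hsimple

end Aux7

section Aux8
variable {X1 X2 : Type*}

lemma core [Nonempty X1] [Nonempty X2]
    (C1 : Set ((X1 → ℝ) × Set X1)) (hC1 : C1 ⊆ domC X1)
    (lp1 : (X1 → ℝ) → Set X1 → EReal) (hlp1 : Coherent C1 lp1)
    (C2 : Set ((X2 → ℝ) × Set X2)) (hC2 : C2 ⊆ domC X2)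
    (lp2 : (X2 → ℝ) → Set X2 → EReal) (hlp2 : Coherent C2 lp2)
    (F1 : Set (Set X1)) (F2 : Set (Set X2))
    (g : X1 → ℝ) (k : X2 → ℝ) (hk : IsGamble k) (hg : IsGamble g) (hg0 : 0 ≤ g)
    (hgm : BMeas F1 g) :
    lpProd C1 lp1 C2 lp2 F1 F2 (fun p => g p.1 * k p.2) Set.univ =
        natExtLP C1 lp1 (fun x1 => g x1 * (natExtLP C2 lp2 k Set.univ).toReal) Set.univ ∧
      (0 ≤ natExtLP C2 lp2 k Set.univ →
        lpProd C1 lp1 C2 lp2 F1 F2 (fun p => g p.1 * k p.2) Set.univ =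
          (((natExtLP C1 lp1 g Set.univ).toReal *
            (natExtLP C2 lp2 k Set.univ).toReal : ℝ) : EReal)) ∧
      (natExtLP C2 lp2 k Set.univ ≤ 0 →
        lpProd C1 lp1 C2 lp2 F1 F2 (fun p => g p.1 * k p.2) Set.univ =
          (((-natExtLP C1 lp1 (-g) Set.univ).toReal *
            (natExtLP C2 lp2 k Set.univ).toReal : ℝ) : EReal)) := by
  have hD1 : CoherentSDG (ElpSet C1 lp1) := coherent_ElpSet hC1 hlp1
  have hD2 : CoherentSDG (ElpSet C2 lp2) := coherent_ElpSet hC2 hlp2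
  set D1 := ElpSet C1 lp1 with hD1def
  set D2 := ElpSet C2 lp2 with hD2def
  set μ := Lr D2 k with hμ
  have hkval : natExtLP C2 lp2 k Set.univ = ((μ : ℝ) : EReal) := lpOf_univ_coe hD2 hk
  have htoR : (natExtLP C2 lp2 k Set.univ).toReal = μ := by
    rw [hkval]; exact EReal.toReal_coe μ
  have hgμ : IsGamble (fun x1 => g x1 * μ) := hg.mul (isGamble_const μ)
  set D := indNatExt D1 D2 F1 F2 with hDdef
  have hGK : IsGamble (fun p : X1 × X2 => g p.1 * k p.2) :=
    (hg.comp Prod.fst).mul (hk.comp Prod.snd)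
  have hSne : (Sset D (fun p : X1 × X2 => g p.1 * k p.2)).Nonempty :=
    Sset_nonempty (fun f hf h0 hne => mem_posi (Or.inr ⟨hf, h0, hne⟩)) hGK
  have hub : ∀ m ∈ Sset D (fun p : X1 × X2 => g p.1 * k p.2),
      m ≤ Lr D1 (fun x1 => g x1 * μ) := fun m hm => upper hD1 hD2 hg hk hm
  have hSbdd : BddAbove (Sset D (fun p : X1 × X2 => g p.1 * k p.2)) :=
    ⟨Lr D1 (fun x1 => g x1 * μ), fun m hm => hub m hm⟩
  have hprodLr : Lr D (fun p : X1 × X2 => g p.1 * k p.2) = Lr D1 (fun x1 => g x1 * μ) := by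
    refine le_antisymm (csSup_le hSne hub) ?_
    refine le_of_forall_lt fun c hc => ?_
    obtain ⟨c', h1, h2⟩ := exists_between hc
    exact lt_of_lt_of_le h1 (le_csSup hSbdd (lower hD1 hD2 hg hgm hk h2))
  have hlhs : lpProd C1 lp1 C2 lp2 F1 F2 (fun p => g p.1 * k p.2) Set.univ
      = ((Lr D1 (fun x1 => g x1 * μ) : ℝ) : EReal) := by
    show lpOf D (fun p => g p.1 * k p.2) Set.univ = _
    rw [lpOf_univ, sSup_image_toEReal hSne hSbdd]
    exact_mod_cast congrArg (fun r : ℝ => ((r : ℝ) : EReal)) hprodLr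
  refine ⟨?_, ?_, ?_⟩
  · rw [hlhs]
    simp only [htoR]
    exact (lpOf_univ_coe hD1 hgμ).symm
  · intro h0
    rw [hkval] at h0
    have h0' : (0:ℝ) ≤ μ := by exact_mod_cast h0
    have hgval : (natExtLP C1 lp1 g Set.univ).toReal = Lr D1 g := by
      have h' : natExtLP C1 lp1 g Set.univ = ((Lr D1 g : ℝ) : EReal) := lpOf_univ_coe hD1 hg
      rw [h']; exact EReal.toReal_coe _
    rw [hlhs, hgval, htoR]
    norm_cast
    rcases h0'.lt_or_eq with hpos | hzero
    · have heq : (fun x1 => g x1 * μ) = μ • g := by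
        funext x1; simp [smul_eq_mul]; ring
      rw [heq, Lr_smul hD1 hg hpos]; ring
    · have heq : (fun x1 => g x1 * μ) = (fun _ : X1 => (0:ℝ)) := by
        funext x1; rw [← hzero]; ring
      rw [heq, Lr_const hD1, ← hzero, mul_zero]
  · intro hle
    rw [hkval] at hle
    have hle' : μ ≤ (0:ℝ) := by exact_mod_cast hle
    have hgval : (-natExtLP C1 lp1 (-g) Set.univ).toReal = -(Lr D1 (-g)) := by
      have h' : natExtLP C1 lp1 (-g) Set.univ = ((Lr D1 (-g) : ℝ) : EReal) :=
        lpOf_univ_coe hD1 hg.neg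
      rw [h', ← EReal.coe_neg]
      exact EReal.toReal_coe _
    rw [hlhs, hgval, htoR]
    norm_cast
    rcases hle'.lt_or_eq with hneg | hzero
    · have heq : (fun x1 => g x1 * μ) = (-μ) • (-g) := by
        funext x1; simp [smul_eq_mul]; ring
      rw [heq, Lr_smul hD1 hg.neg (by linarith)]; ring
    · have heq : (fun x1 => g x1 * μ) = (fun _ : X1 => (0:ℝ)) := by
        funext x1; rw [hzero]; ring
      rw [heq, Lr_const hD1, hzero, mul_zero]

lemma indNatExt_swap_mem {D1 : Set (X1 → ℝ)} {D2 : Set (X2 → ℝ)}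
    {F1 : Set (Set X1)} {F2 : Set (Set X2)}
    {f : X1 × X2 → ℝ} (hf : f ∈ indNatExt D1 D2 F1 F2) :
    (fun q : X2 × X1 => f (q.2, q.1)) ∈ indNatExt D2 D1 F2 F1 := by
  obtain ⟨n, l, hs, hl, hh, rfl⟩ := hf
  refine ⟨n, l, fun i => (fun q : X2 × X1 => hs i (q.2, q.1)), hl, ?_, ?_⟩
  · intro i
    rcases hh i with (h12 | h21) | hpos
    · obtain ⟨f2, hf2, B1, hB1, heq⟩ := h12
      refine Or.inl (Or.inr ⟨f2, hf2, B1, hB1, ?_⟩)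
      funext q
      show hs i (q.2, q.1) = f2 q.1 * ind B1 q.2
      rw [heq]
    · obtain ⟨f1, hf1, B2, hB2, heq⟩ := h21
      refine Or.inl (Or.inl ⟨f1, hf1, B2, hB2, ?_⟩)
      funext q
      show hs i (q.2, q.1) = f1 q.2 * ind B2 q.1
      rw [heq]
    · refine Or.inr ⟨hpos.1.comp (fun q : X2 × X1 => (q.2, q.1)), fun q => hpos.2.1 (q.2, q.1), ?_⟩
      intro h0
      apply hpos.2.2
      funext p
      have := congrFun h0 (p.2, p.1)
      simpa using this
  · funext q
    simp only [Finset.sum_apply, Pi.smul_apply, smul_eq_mul]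

lemma Sset_indNatExt_swap {D1 : Set (X1 → ℝ)} {D2 : Set (X2 → ℝ)}
    {F1 : Set (Set X1)} {F2 : Set (Set X2)} (H : X1 × X2 → ℝ) :
    Sset (indNatExt D1 D2 F1 F2) H
      = Sset (indNatExt D2 D1 F2 F1) (fun q : X2 × X1 => H (q.2, q.1)) := by
  ext m
  constructor
  · intro hm
    exact indNatExt_swap_mem hm
  · intro hm
    exact indNatExt_swap_mem hm

lemma lpOf_indNatExt_swap {D1 : Set (X1 → ℝ)} {D2 : Set (X2 → ℝ)}
    (F1 : Set (Set X1)) (F2 : Set (Set X2)) (H : X1 × X2 → ℝ) :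
    lpOf (indNatExt D1 D2 F1 F2) H Set.univ
      = lpOf (indNatExt D2 D1 F2 F1) (fun q : X2 × X1 => H (q.2, q.1)) Set.univ := by
  rw [lpOf_univ, lpOf_univ, Sset_indNatExt_swap H]

end Aux8

/-- Corollary 6, Factorisation: the independent natural extension
factorises over measurable nonnegative `g`. -/
theorem stmt15 {X1 X2 : Type*} [Nonempty X1] [Nonempty X2]
    (C1 : Set ((X1 → ℝ) × Set X1)) (hC1 : C1 ⊆ domC X1)
    (lp1 : (X1 → ℝ) → Set X1 → EReal) (hlp1 : Coherent C1 lp1)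
    (C2 : Set ((X2 → ℝ) × Set X2)) (hC2 : C2 ⊆ domC X2)
    (lp2 : (X2 → ℝ) → Set X2 → EReal) (hlp2 : Coherent C2 lp2)
    (F1 : Set (Set X1)) (F2 : Set (Set X2))
    (hF1 : ∀ A ∈ F1, A.Nonempty) (hF2 : ∀ A ∈ F2, A.Nonempty) :
    (∀ (g : X1 → ℝ) (k : X2 → ℝ), IsGamble k → IsGamble g → 0 ≤ g → BMeas F1 g →
      lpProd C1 lp1 C2 lp2 F1 F2 (fun p => g p.1 * k p.2) Set.univ =
        natExtLP C1 lp1 (fun x1 => g x1 * (natExtLP C2 lp2 k Set.univ).toReal) Set.univ ∧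
      (0 ≤ natExtLP C2 lp2 k Set.univ →
        lpProd C1 lp1 C2 lp2 F1 F2 (fun p => g p.1 * k p.2) Set.univ =
          (((natExtLP C1 lp1 g Set.univ).toReal *
            (natExtLP C2 lp2 k Set.univ).toReal : ℝ) : EReal)) ∧
      (natExtLP C2 lp2 k Set.univ ≤ 0 →
        lpProd C1 lp1 C2 lp2 F1 F2 (fun p => g p.1 * k p.2) Set.univ =
          (((-natExtLP C1 lp1 (-g) Set.univ).toReal *
            (natExtLP C2 lp2 k Set.univ).toReal : ℝ) : EReal))) ∧
    (∀ (g : X2 → ℝ) (k : X1 → ℝ), IsGamble k → IsGamble g → 0 ≤ g → BMeas F2 g →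
      lpProd C1 lp1 C2 lp2 F1 F2 (fun p => g p.2 * k p.1) Set.univ =
        natExtLP C2 lp2 (fun x2 => g x2 * (natExtLP C1 lp1 k Set.univ).toReal) Set.univ ∧
      (0 ≤ natExtLP C1 lp1 k Set.univ →
        lpProd C1 lp1 C2 lp2 F1 F2 (fun p => g p.2 * k p.1) Set.univ =
          (((natExtLP C2 lp2 g Set.univ).toReal *
            (natExtLP C1 lp1 k Set.univ).toReal : ℝ) : EReal)) ∧
      (natExtLP C1 lp1 k Set.univ ≤ 0 →
        lpProd C1 lp1 C2 lp2 F1 F2 (fun p => g p.2 * k p.1) Set.univ =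
          (((-natExtLP C2 lp2 (-g) Set.univ).toReal *
            (natExtLP C1 lp1 k Set.univ).toReal : ℝ) : EReal))) := by
  constructor
  · intro g k hk hg hg0 hgm
    exact core C1 hC1 lp1 hlp1 C2 hC2 lp2 hlp2 F1 F2 g k hk hg hg0 hgm
  · intro g k hk hg hg0 hgm
    have h := core C2 hC2 lp2 hlp2 C1 hC1 lp1 hlp1 F2 F1 g k hk hg hg0 hgm
    have hswap : lpProd C1 lp1 C2 lp2 F1 F2 (fun p : X1 × X2 => g p.2 * k p.1) Set.univ
        = lpProd C2 lp2 C1 lp1 F2 F1 (fun p : X2 × X1 => g p.1 * k p.2) Set.univ := by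
      show lpOf (indNatExt (ElpSet C1 lp1) (ElpSet C2 lp2) F1 F2) _ Set.univ
          = lpOf (indNatExt (ElpSet C2 lp2) (ElpSet C1 lp1) F2 F1) _ Set.univ
      exact lpOf_indNatExt_swap F1 F2 (fun p : X1 × X2 => g p.2 * k p.1)
    rw [hswap]
    exact h

end IPaper
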